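/- arXiv:1605.04276 — 3 statements merged into one kernel-verified Lean document; each statement's English description precedes it below -/
import Mathlib

section
/- The alternating group A6 is not (2,3)-generated: no pair of elements of orders 2 and 3 generates A6. -/
set_option maxRecDepth 20000
set_option maxHeartbeats 8000000

open Equiv Equiv.Perm

private abbrev G6 := Equiv.Perm (Fin 6)
private abbrev T6 := Finset (Finset (Finset (Fin 6)))

/-- An explicit 3-cycle `i ↦ j ↦ k ↦ i` (when `i, j, k` are distinct). -/
private def c3 (i j k : Fin 6) : G6 := Equiv.swap i j * Equiv.swap j k

/-- Action of a permutation on a finite set of finite sets of finite sets of points. -/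
private def pact (g : G6) (O : T6) : T6 := O.image (fun m => m.image (fun p => p.image g))

private lemma pact_mul (g h : G6) (O : T6) : pact (g * h) O = pact g (pact h O) := by
  simp only [pact, Finset.image_image, Function.comp_def, Perm.coe_mul, Finset.image_image]

private lemma pact_one (O : T6) : pact 1 O = O := by
  simp [pact]

private lemma closure_fixes {x y : G6} {O : T6} (hx : pact x O = O) (hy : pact y O = O) :
    ∀ z ∈ Subgroup.closure ({x, y} : Set G6), pact z O = O := by
  intro z hz
  refine Subgroup.closure_induction ?_ (pact_one O) ?_ ?_ hz
  · rintro w (rfl | rfl) <;> assumption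
  · intro a b _ _ ha hb; rw [pact_mul, hb, ha]
  · intro a _ ha
    have h2 := congrArg (pact a⁻¹) ha
    rw [← pact_mul, inv_mul_cancel, pact_one] at h2
    exact h2.symm

private lemma final_contra {x y g : G6} {O : T6} (hx : pact x O = O) (hy : pact y O = O)
    (h : Subgroup.closure ({x, y} : Set G6) = alternatingGroup (Fin 6))
    (hg : Equiv.Perm.sign g = 1) (hgO : pact g O ≠ O) : False := by
  have hmem : g ∈ Subgroup.closure ({x, y} : Set G6) := by
    rw [h]; exact mem_alternatingGroup.2 hg
  exact hgO (closure_fixes hx hy g hmem)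

private lemma map_conj_alt (σ : G6) :
    (alternatingGroup (Fin 6)).map (MulAut.conj σ).toMonoidHom = alternatingGroup (Fin 6) := by
  ext z
  simp only [Subgroup.mem_map, MulEquiv.coe_toMonoidHom, MulAut.conj_apply, mem_alternatingGroup]
  constructor
  · rintro ⟨w, hw, rfl⟩
    simp [map_mul, hw, mul_comm]
  · intro hz
    exact ⟨σ⁻¹ * z * σ, by simp [map_mul, hz, mul_comm], by group⟩

private lemma conj_closure (σ X Y : G6)
    (h : Subgroup.closure ({X, Y} : Set G6) = alternatingGroup (Fin 6)) :
    Subgroup.closure ({σ⁻¹ * X * σ, σ⁻¹ * Y * σ} : Set G6) = alternatingGroup (Fin 6) := by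
  have h2 := congrArg (Subgroup.map (MulAut.conj σ⁻¹).toMonoidHom) h
  rw [MonoidHom.map_closure, Set.image_pair, map_conj_alt] at h2
  simpa only [MulEquiv.coe_toMonoidHom, MulAut.conj_apply, inv_inv] using h2

private lemma cycleType_replicate {σ : G6} {p : ℕ} (hp : p.Prime) (h : orderOf σ = p) :
    σ.cycleType = Multiset.replicate σ.cycleType.card p := by
  refine Multiset.eq_replicate_card.2 fun n hn => ?_
  have h1 : n ∣ p := by rw [← h, ← Equiv.Perm.lcm_cycleType]; exact Multiset.dvd_lcm hn
  have h2 := Equiv.Perm.two_le_of_mem_cycleType hn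
  rcases hp.eq_one_or_self_of_dvd n h1 with h' | h'
  · omega
  · exact h'

private lemma card_le {σ : G6} {p : ℕ} (h : σ.cycleType = Multiset.replicate σ.cycleType.card p) :
    p * σ.cycleType.card ≤ 6 := by
  have h1 : σ.cycleType.sum = σ.support.card := Equiv.Perm.sum_cycleType σ
  have h2 : σ.support.card ≤ 6 := by
    simpa using Finset.card_le_univ σ.support
  calc p * σ.cycleType.card = σ.cycleType.sum := by
        conv_rhs => rw [h]
        rw [Multiset.sum_replicate, smul_eq_mul, mul_comm]
    _ ≤ 6 := h1 ▸ h2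

private lemma ct_c3 {i j k : Fin 6} (hij : i ≠ j) (hik : i ≠ k) (hjk : j ≠ k) :
    (c3 i j k).cycleType = {3} := by
  have := (isThreeCycle_swap_mul_swap_same hij.symm hjk hik).cycleType
  rwa [Equiv.swap_comm j i] at this

private lemma disj_y : Equiv.Perm.Disjoint (c3 0 1 2) (c3 3 4 5) := by
  intro z; revert z; decide

private lemma disj_x :
    Equiv.Perm.Disjoint (Equiv.swap (0 : Fin 6) 1) (Equiv.swap (2 : Fin 6) 3) := by
  intro z; revert z; decide

private lemma ct_y0 : (c3 0 1 2 : G6).cycleType = {3} :=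
  ct_c3 (by decide) (by decide) (by decide)

private lemma ct_y1 : (c3 0 1 2 * c3 3 4 5 : G6).cycleType = {3, 3} := by
  rw [disj_y.cycleType_mul, ct_c3 (by decide) (by decide) (by decide),
    ct_c3 (by decide) (by decide) (by decide)]
  rfl

private lemma ct_swap {i j : Fin 6} (h : i ≠ j) : (Equiv.swap i j).cycleType = {2} := by
  rw [(isCycle_swap h).cycleType, card_support_swap h]

private lemma ct_x0 : (Equiv.swap (0:Fin 6) 1 * Equiv.swap 2 3 : G6).cycleType = {2, 2} := by
  rw [disj_x.cycleType_mul, ct_swap (by decide), ct_swap (by decide)]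
  rfl

/-- Certificate objects: each is fixed by `c3 0 1 2` (fixed points, fixed 2-element
subsets, and the invariant partition into two triples). -/
private def certs0 : List T6 :=
  [{{{3}}}, {{{4}}}, {{{5}}}, {{{3,4}}}, {{{3,5}}}, {{{4,5}}}, {{{0,1,2},{3,4,5}}}]

/-- Certificate objects: each is fixed by `c3 0 1 2 * c3 3 4 5` (the invariant partition
into two triples, three invariant perfect matchings, and three invariant
one-factorizations of the complete graph on six vertices). -/
private def certs1 : List T6 := [
  {{{0,1,2},{3,4,5}}},
  {{{0,3},{1,4},{2,5}}},
  {{{0,5},{1,3},{2,4}}},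
  {{{0,4},{1,5},{2,3}}},
  {{{0,1},{2,4},{3,5}},{{0,2},{1,3},{4,5}},{{0,3},{1,4},{2,5}},{{0,4},{1,5},{2,3}},{{0,5},{1,2},{3,4}}},
  {{{0,1},{2,3},{4,5}},{{0,2},{1,5},{3,4}},{{0,3},{1,4},{2,5}},{{0,4},{1,2},{3,5}},{{0,5},{1,3},{2,4}}},
  {{{0,1},{2,5},{3,4}},{{0,2},{1,4},{3,5}},{{0,3},{1,2},{4,5}},{{0,4},{1,5},{2,3}},{{0,5},{1,3},{2,4}}}]

private lemma cover0s : ∀ a b c d : Fin 6, a<b→c<d→a<c→b≠c→b≠d→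
    ∃ O ∈ certs0, pact (Equiv.swap a b * Equiv.swap c d) O = O := by decide

private lemma cover1s : ∀ a b c d : Fin 6, a<b→c<d→a<c→b≠c→b≠d→
    ∃ O ∈ certs1, pact (Equiv.swap a b * Equiv.swap c d) O = O := by decide

private lemma disj_swap {a b c d : Fin 6} (hac : a≠c) (had : a≠d) (hbc : b≠c) (hbd : b≠d) :
    Equiv.Perm.Disjoint (Equiv.swap a b) (Equiv.swap c d) := by
  intro z
  rcases eq_or_ne z a with rfl | hza
  · right; exact Equiv.swap_apply_of_ne_of_ne hac had
  rcases eq_or_ne z b with rfl | hzb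
  · right; exact Equiv.swap_apply_of_ne_of_ne hbc hbd
  · left; exact Equiv.swap_apply_of_ne_of_ne hza hzb

private lemma sorted_cover {L : List T6}
    (cov : ∀ a b c d : Fin 6, a<b→c<d→a<c→b≠c→b≠d→
      ∃ O ∈ L, pact (Equiv.swap a b * Equiv.swap c d) O = O) :
    ∀ a b c d : Fin 6, a≠b→a≠c→a≠d→b≠c→b≠d→c≠d→
      ∃ O ∈ L, pact (Equiv.swap a b * Equiv.swap c d) O = O := by
  have cov2 : ∀ a b c d : Fin 6, a<b→c<d→a≠c→a≠d→b≠c→b≠d→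
      ∃ O ∈ L, pact (Equiv.swap a b * Equiv.swap c d) O = O := by
    intro a b c d hab hcd hac had hbc hbd
    rcases lt_or_gt_of_ne hac with h | h
    · exact cov a b c d hab hcd h hbc hbd
    · obtain ⟨O, hO, hp⟩ := cov c d a b hcd hab h had.symm hbd.symm
      exact ⟨O, hO, by rwa [(disj_swap hac had hbc hbd).commute.eq]⟩
  intro a b c d hab hac had hbc hbd hcd
  rcases lt_or_gt_of_ne hab with h1 | h1 <;> rcases lt_or_gt_of_ne hcd with h2 | h2
  · exact cov2 a b c d h1 h2 hac had hbc hbd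
  · rw [Equiv.swap_comm c d]; exact cov2 a b d c h1 h2 had hac hbd hbc
  · rw [Equiv.swap_comm a b]; exact cov2 b a c d h1 h2 hbc hbd hac had
  · rw [Equiv.swap_comm a b, Equiv.swap_comm c d]; exact cov2 b a d c h1 h2 hbd hbc had hac

private lemma cover0 : ∀ a b c d : Fin 6, a≠b→a≠c→a≠d→b≠c→b≠d→c≠d→
    ∃ O ∈ certs0, pact (Equiv.swap a b * Equiv.swap c d) O = O := sorted_cover cover0s

private lemma cover1 : ∀ a b c d : Fin 6, a≠b→a≠c→a≠d→b≠c→b≠d→c≠d→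
    ∃ O ∈ certs1, pact (Equiv.swap a b * Equiv.swap c d) O = O := sorted_cover cover1s

private lemma case0 (τ : G6)
    (htop : Subgroup.closure
      ({Equiv.swap (τ 0) (τ 1) * Equiv.swap (τ 2) (τ 3), c3 0 1 2} : Set G6) =
      alternatingGroup (Fin 6)) : False := by
  have inj := τ.injective
  obtain ⟨O, hO, hxO⟩ := cover0 (τ 0) (τ 1) (τ 2) (τ 3)
    (inj.ne (by decide)) (inj.ne (by decide)) (inj.ne (by decide))
    (inj.ne (by decide)) (inj.ne (by decide)) (inj.ne (by decide))
  fin_cases hO <;>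
    first
      | exact final_contra hxO (by decide) htop (g := c3 0 1 2) (by decide) (by decide)
      | exact final_contra hxO (by decide) htop (g := c3 0 1 3) (by decide) (by decide)
      | exact final_contra hxO (by decide) htop (g := c3 0 1 4) (by decide) (by decide)
      | exact final_contra hxO (by decide) htop (g := c3 0 1 5) (by decide) (by decide)

private lemma case1 (τ : G6)
    (htop : Subgroup.closure
      ({Equiv.swap (τ 0) (τ 1) * Equiv.swap (τ 2) (τ 3), c3 0 1 2 * c3 3 4 5} : Set G6) =
      alternatingGroup (Fin 6)) : False := by
  have inj := τ.injective
  obtain ⟨O, hO, hxO⟩ := cover1 (τ 0) (τ 1) (τ 2) (τ 3)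
    (inj.ne (by decide)) (inj.ne (by decide)) (inj.ne (by decide))
    (inj.ne (by decide)) (inj.ne (by decide)) (inj.ne (by decide))
  fin_cases hO <;>
    first
      | exact final_contra hxO (by decide) htop (g := c3 0 1 2) (by decide) (by decide)
      | exact final_contra hxO (by decide) htop (g := c3 0 1 3) (by decide) (by decide)
      | exact final_contra hxO (by decide) htop (g := c3 0 1 4) (by decide) (by decide)
      | exact final_contra hxO (by decide) htop (g := c3 0 1 5) (by decide) (by decide)

private lemma endgame (X Y : G6) (hct : X.cycleType = {2,2})
    (htop : Subgroup.closure ({X, Y} : Set G6) = alternatingGroup (Fin 6))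
    (hcase : ∀ τ : G6, Subgroup.closure
      ({Equiv.swap (τ 0) (τ 1) * Equiv.swap (τ 2) (τ 3), Y} : Set G6) =
      alternatingGroup (Fin 6) → False) : False := by
  obtain ⟨τ, hτ⟩ := isConj_iff.1 (Equiv.Perm.isConj_iff_cycleType_eq.2 (ct_x0.trans hct.symm))
  have hXeq : X = Equiv.swap (τ 0) (τ 1) * Equiv.swap (τ 2) (τ 3) := by
    rw [← hτ, Equiv.swap_apply_apply, Equiv.swap_apply_apply]
    group
  exact hcase τ (by rw [← hXeq]; exact htop)

/-- The alternating group A₆ is not (2,3)-generated. -/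
theorem alternatingGroup_six_not_two_three_generated :
    ¬ ∃ x y : alternatingGroup (Fin 6), orderOf x = 2 ∧ orderOf y = 3 ∧
      Subgroup.closure ({x, y} : Set (alternatingGroup (Fin 6))) = ⊤ := by
  rintro ⟨x, y, hx2, hy3, htop⟩
  -- move to the permutation group
  have htopP : Subgroup.closure ({(x : G6), (y : G6)} : Set G6) = alternatingGroup (Fin 6) := by
    have h := congrArg (Subgroup.map (alternatingGroup (Fin 6)).subtype) htop
    rwa [MonoidHom.map_closure, Set.image_pair, ← MonoidHom.range_eq_map,
      Subgroup.range_subtype] at h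
  have hX2 : orderOf (x : G6) = 2 := (Subgroup.orderOf_coe x).trans hx2
  have hY3 : orderOf (y : G6) = 3 := (Subgroup.orderOf_coe y).trans hy3
  -- the cycle type of x must be {2, 2}
  have hxrep := cycleType_replicate Nat.prime_two hX2
  have hxk : (x : G6).cycleType.card = 2 := by
    have h6 := card_le hxrep
    have hk0 : (x : G6).cycleType.card ≠ 0 := by
      intro h0
      rw [h0, Multiset.replicate_zero, Equiv.Perm.cycleType_eq_zero] at hxrep
      rw [hxrep] at hX2; simp at hX2
    have hsign : Equiv.Perm.sign (x : G6) = 1 := mem_alternatingGroup.1 x.2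
    rw [Equiv.Perm.sign_of_cycleType] at hsign
    rw [hxrep] at hsign
    simp only [Multiset.sum_replicate, Multiset.card_replicate, smul_eq_mul] at hsign
    have hkle : (x : G6).cycleType.card ≤ 3 := by omega
    set k := (x : G6).cycleType.card with hkdef
    interval_cases k
    · simp at hk0
    · exfalso; revert hsign; decide
    · rfl
    · exfalso; revert hsign; decide
  have hctX : (x : G6).cycleType = {2, 2} := by rw [hxrep, hxk]; rfl
  -- the cycle type of y must be {3} or {3, 3}
  have hyrep := cycleType_replicate Nat.prime_three hY3
  have hctY : (y : G6).cycleType = {3} ∨ (y : G6).cycleType = {3, 3} := by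
    have h6 := card_le hyrep
    have hk0 : (y : G6).cycleType.card ≠ 0 := by
      intro h0
      rw [h0, Multiset.replicate_zero, Equiv.Perm.cycleType_eq_zero] at hyrep
      rw [hyrep] at hY3; simp at hY3
    have hkle : (y : G6).cycleType.card ≤ 2 := by omega
    set k := (y : G6).cycleType.card with hkdef
    interval_cases k
    · simp at hk0
    · left; rw [hyrep]; rfl
    · right; rw [hyrep]; rfl
  -- conjugate y to a standard form and finish
  rcases hctY with hctY | hctY
  · obtain ⟨σ, hσ⟩ := isConj_iff.1 (Equiv.Perm.isConj_iff_cycleType_eq.2 (ct_y0.trans hctY.symm))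
    have h3 := conj_closure σ (x : G6) (y : G6) htopP
    have hYc : σ⁻¹ * (y : G6) * σ = c3 0 1 2 := by rw [← hσ]; group
    rw [hYc] at h3
    have hconj : IsConj (x : G6) (σ⁻¹ * (x : G6) * σ) := isConj_iff.2 ⟨σ⁻¹, by rw [inv_inv]⟩
    have hctX' : (σ⁻¹ * (x : G6) * σ).cycleType = {2, 2} :=
      (Equiv.Perm.isConj_iff_cycleType_eq.1 hconj).symm.trans hctX
    exact endgame _ _ hctX' h3 case0
  · obtain ⟨σ, hσ⟩ := isConj_iff.1 (Equiv.Perm.isConj_iff_cycleType_eq.2 (ct_y1.trans hctY.symm))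
    have h3 := conj_closure σ (x : G6) (y : G6) htopP
    have hYc : σ⁻¹ * (y : G6) * σ = c3 0 1 2 * c3 3 4 5 := by rw [← hσ]; group
    rw [hYc] at h3
    have hconj : IsConj (x : G6) (σ⁻¹ * (x : G6) * σ) := isConj_iff.2 ⟨σ⁻¹, by rw [inv_inv]⟩
    have hctX' : (σ⁻¹ * (x : G6) * σ).cycleType = {2, 2} :=
      (Equiv.Perm.isConj_iff_cycleType_eq.1 hconj).symm.trans hctX
    exact endgame _ _ hctX' h3 case1
end

section
/- The permutations η1 = (2,5)(4,8), η2 = (1,6)(4,9), η3 = (1,3)(2,8)(4,9)(5,6) of the set {1,2,3,4,5,6,8,9} generate the full alternating group on {1,2,3,4,5,6,8,9}. -/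
open Equiv List

namespace EtaGenAux

abbrev pd : Fin 12 → Prop := fun x => x ≠ 0 ∧ x ≠ 7 ∧ x ≠ 10 ∧ x ≠ 11

abbrev Dt := {x : Fin 12 // pd x}

def e1 : Perm (Fin 12) := [(2 : Fin 12), 5].formPerm * [(4 : Fin 12), 8].formPerm
def e2 : Perm (Fin 12) := [(1 : Fin 12), 6].formPerm * [(4 : Fin 12), 9].formPerm
def e3 : Perm (Fin 12) := [(1 : Fin 12), 3].formPerm * [(2 : Fin 12), 8].formPerm *
    [(4 : Fin 12), 9].formPerm * [(5 : Fin 12), 6].formPerm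

lemma h1 : ∀ x, pd (e1 x) ↔ pd x := by decide
lemma h2 : ∀ x, pd (e2 x) ↔ pd x := by decide
lemma h3 : ∀ x, pd (e3 x) ↔ pd x := by decide

lemma h1' : ∀ x, e1 x ≠ x → pd x := by decide
lemma h2' : ∀ x, e2 x ≠ x → pd x := by decide
lemma h3' : ∀ x, e3 x ≠ x → pd x := by decide

def g1 : Perm Dt := e1.subtypePerm h1
def g2 : Perm Dt := e2.subtypePerm h2
def g3 : Perm Dt := e3.subtypePerm h3

def gen : ℕ → Perm Dt := fun n => ([g1, g2, g3].getD n 1)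

set_option maxHeartbeats 1000000 in
def tbl : List (List ℕ) := [[],
[],
[],
[],
[],
[],
[],
[],
[],
[],
[0,2,1,0,2,1,0,1,2,0,2,1,0,1,2],
[1,2,1,0,2,0,1,0,1,2,0,1,2,1],
[1,0,2,0,2,0,2,1,0,1,2,0,2,0,2,1],
[2,0,1,2,1,0,1,0,2,0,1,2,1],
[2,0,1,0,1,2,0,1,0,2,0,2,1],
[1,2,0,2,0,1,0,1,2,0,2,1],
[],
[2,0,2,1,0,1,2,0,2,1,0,2,1,0,1],
[],
[0,2,1,0,1,2,0,1,2,0,2,1,0,1,2],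
[0,2,1,0,1,2,0,2,1,0,1,2,0,1,2],
[0,1,2,0,2,1,0,1,2,0,2,1,0,1,2],
[2,0,2,1,0,2,1,0,1,2,0,2,1,0,1],
[1,0,1,2,0,2,1,0,2,1,0,1,2,0,2],
[],
[1,2,1,0,2,1,0,1,0,2,0,1,2,1],
[2,1,0,1,2,0,2,1,0,2,1,0,1,2,0],
[],
[0,1,2,0,2,0,1,0,2,1,0,1,0,2,0],
[0,2,0,1,0,1,0,2,1,0],
[1,0,1,0,1,2,0,1,0,1,0,2,1],
[0,1,2,0,1,0,1,0,2,0,1],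
[],
[1,2,0,2,0,2,1,0,1,0,2,0,2,0,2,1],
[2,0,1,2,0,2,1,0,1,2,0,2,1,0,1],
[0,2,0,1,0,1,2,0,1,0,2,0,2,1,0],
[],
[0,2,0,1,2,1,0,1,0,2,0,1,2,1,0],
[1,0,2,0,2,0,1,0,1,2,0,2,0,1],
[0,1,2,0,2,0,1,0,1,2,0,2,1,0],
[],
[1,2,0,1,2,1,0,1,0,2,0,1,2],
[0,2,1,0,1,2,0,2,1,0,1,2,0,2,1],
[0,1,2,0,1,0,1,0,2,0],
[0,1,2,0,1,2,1,0,1,0,2,0,1,2,0],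
[],
[1,2,0,1,0,1,0,2],
[1,0,2,0,1,0,1,0,2,1,0,1],
[],
[1,2,0,2,0,1,0,2,1,0,1,0,2],
[0,2,1,0,1,2,0,2,1,0,2,1,0,1,2],
[1,2,0,1,0,1,0,2,1,0,1,0,1],
[1,0,2,0,2,1,0,1,0,2,0,2,0,1],
[2,0,1,0,1,0,2,1],
[],
[1,2,0,1,0,1,0,2,0,1,0],
[],
[1,2,0,2,1,0,1,0,2,0,2,1],
[2,0,2,1,0,1,2,0,1,2,0,2,1,0,1],
[1,0,2,0,1,0,1,0,2,1,0],
[0,1,2,0,2,1,0,1,0,2,0,2,1,0],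
[1,0,1,2,0,1,0,1,0,2,0,1],
[0,1,0,2,0,1,0,1,0,2,1],
[],
[],
[],
[2,0,2,1,0,1,2,0,2,1,0,2,1,0,1],
[1,2,1,0,2,1,0,1,0,2,0,1,2,1],
[1,2,0,2,0,2,1,0,1,0,2,0,2,0,2,1],
[1,2,0,1,2,1,0,1,0,2,0,1,2],
[1,2,0,2,0,1,0,2,1,0,1,0,2],
[1,2,0,2,1,0,1,0,2,0,2,1],
[],
[],
[],
[],
[],
[],
[],
[],
[0,2,1,0,2,1,0,1,2,0,2,1,0,1,2],
[],
[],
[0,1,0,2,0,1,0,2,1,0,2,1,2],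
[0,1,0,2,1,2,0,1],
[0,1,2,0,1,2,0,2,1,0,1,2,0,2,1],
[0,1,0,1,2,0,1,0,2,0,2,1,2],
[1,2,0,1,0,1,2,0,1,2,1,2,0],
[1,2,1,0,2,0,1,0,1,2,0,1,2,1],
[],
[0,1,0,2,1,2,0,1,2,0,1,0,2],
[],
[0,1,0,1,0,2,1,0,1,0,2],
[2,0,2,0,1,0,1,2,0,2],
[2,0,1,0,1,2,0,1,0,1],
[2,0,1,0,1,2],
[1,0,2,0,2,0,2,1,0,1,2,0,2,0,2,1],
[],
[0,1,0,1,0,2,1,2],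
[0,1,0,2,0,1,0,1,2,0,1],
[],
[0,2,0,2,0,2,1,0,1,2,0,2,0,2],
[0,1,0,2,1,0,1,0,2,0,1],
[1,0,1,0,2,0,1,0,1,2,0],
[2,0,1,2,1,0,1,0,2,0,1,2,1],
[],
[1,2,0,2,1,0,1,2,0,2,1,0,2,1,0],
[2,0,2,1,0,1,0,2,0,2],
[2,0,2,0,2,1,0,1,0,2,0,2,0,2],
[],
[2,0,2,0,1,0,1,2,0,1,0,1,2],
[2,1,0,2,1,0,1,0,2,0,1,2],
[2,0,1,0,1,2,0,1,0,2,0,2,1],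
[],
[2,1,2,0,2,0,1,0,2,1,0,1,0],
[1,0,1,0,2,1,0,1,0,2],
[0,2,0,1,0,1,2,0,1,0,1],
[1,2,0,1,0,1,2,0,1,0,2,0,2],
[],
[0,1,0,1,2,0,1,0,1,2],
[1,2,0,2,0,1,0,1,2,0,2,1],
[],
[0,1,0,2,1,2,0,2,0,1,0,2,1],
[2,1,0,1,0,2],
[0,1,0,1,0,2,0,1,0,1,2],
[2,1,0,2,0,1,0,1,2,0,1,2],
[1,2,0,1,0,1,2,0,1,0],
[],
[],
[0,2,1,0,2,1,0,1,2,0,2,1,0,1,2],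
[],
[2,1,0,1,2,0,2,1,0,2,1,0,1,2,0],
[2,0,1,2,0,2,1,0,1,2,0,2,1,0,1],
[0,2,1,0,1,2,0,2,1,0,1,2,0,2,1],
[0,2,1,0,1,2,0,2,1,0,2,1,0,1,2],
[2,0,2,1,0,1,2,0,1,2,0,2,1,0,1],
[2,0,2,1,0,1,2,0,2,1,0,2,1,0,1],
[],
[],
[0,1,0,2,1,2,0,1,2,0,1,0,2],
[0,1,0,1,0,2,1,2],
[1,2,0,2,1,0,1,2,0,2,1,0,2,1,0],
[2,1,2,0,2,0,1,0,2,1,0,1,0],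
[0,1,0,2,1,2,0,2,0,1,0,2,1],
[],
[],
[],
[],
[],
[],
[],
[],
[0,2,1,0,1,2,0,1,2,0,2,1,0,1,2],
[0,1,0,2,0,1,0,2,1,0,2,1,2],
[],
[],
[1,0,1,2,0,1,0,1,2,0,2,1,2],
[0,1,2,0,2,1,0,2,1,0,1,2,0,2,1],
[0,2,1,2,0,2,0,1,0,2,0,2,1,2],
[2,1,0,2,0,1,0,1,0,2,1,0,2],
[0,2,1,0,1,2,0,2,1,0,1,2,0,1,2],
[0,1,0,2,1,2,0,1],
[],
[0,2,1,2,0,2,0,1,0,2,1,0,1],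
[],
[0,1,2,0,2,1,0,1,2,0,2,1,0,2,1],
[0,2,1,2,0,1,2,0,1,0,2,0,1],
[2,0,1,2,0,1,0,1,0,2,0,2],
[0,1,2,0,2,1,0,1,2,0,2,1,0,1,2],
[0,1,2,0,1,2,0,2,1,0,1,2,0,2,1],
[],
[1,2,0,2,1,0,1,2,0,1,2,0,2,1,0],
[1,2,0,1,2,0,2,1,0,1,2,0,2,1,0],
[],
[0,1,2,0,2,1,0,1,2,0,1,2,0,2,1],
[1,2,1,0,1,2,0,2,1,0,2,1,0,1,2,0,1],
[2,0,2,1,0,2,1,0,1,2,0,2,1,0,1],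
[0,1,0,1,2,0,1,0,2,0,2,1,2],
[],
[2,1,2,0,2,0,1,0,1,2,0,2,1,2],
[0,1,2,1,0,1,0,2,0,1,2,1,2],
[1,2,0,2,1,0,2,1,0,1,2,0,2,1,0],
[],
[0,2,1,0,2,0,1,0,1,0,2,1,0,2,0],
[1,0,1,2,0,2,1,0,2,1,0,1,2,0,2],
[1,2,0,1,0,1,2,0,1,2,1,2,0],
[],
[2,0,1,2,0,1,0,1,0,2,0,1,2],
[2,0,2,0,1,0,1,0,2,1,0,2],
[1,0,2,1,0,1,2,0,1,2,0,2,1,0,1,2,1],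
[0,2,0,1,2,0,1,0,1,0,2,0,1,2,0],
[],
[],
[1,2,1,0,2,0,1,0,1,2,0,1,2,1],
[0,2,1,0,1,2,0,1,2,0,2,1,0,1,2],
[],
[0,2,0,1,0,1,2,0,1,0,2,0,2,1,0],
[0,1,2,0,1,0,1,0,2,0],
[1,2,0,1,0,1,0,2,1,0,1,0,1],
[1,0,2,0,1,0,1,0,2,1,0],
[1,2,1,0,2,1,0,1,0,2,0,1,2,1],
[],
[0,1,0,2,0,1,0,2,1,0,2,1,2],
[],
[0,1,0,2,0,1,0,1,2,0,1],
[2,0,2,1,0,1,0,2,0,2],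
[1,0,1,0,2,1,0,1,0,2],
[2,1,0,1,0,2],
[2,1,0,1,2,0,2,1,0,2,1,0,1,2,0],
[0,1,0,2,1,2,0,1,2,0,1,0,2],
[],
[],
[0,2,1,2,0,2,0,1,0,2,1,0,1],
[1,2,0,2,1,0,1,2,0,1,2,0,2,1,0],
[2,1,2,0,2,0,1,0,1,2,0,2,1,2],
[2,0,1,2,0,1,0,1,0,2,0,1,2],
[],
[],
[],
[],
[],
[],
[],
[],
[0,1,2,0,2,0,1,0,2,1,0,1,0,2,0],
[0,1,0,1,0,2,1,0,1,0,2],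
[1,0,1,2,0,1,0,1,2,0,2,1,2],
[],
[],
[0,2,0,2,0,1,0,1,2,0,1,0,1,2,0],
[1,0,2,0,1,0,1,2,0,1],
[0,1,2,0,1,0,1,2,0,1],
[0,2,0,1,0,1,0,2,1,0],
[2,0,2,0,1,0,1,2,0,2],
[0,1,2,0,2,1,0,2,1,0,1,2,0,2,1],
[],
[0,1,2,0,1,0,1,2,0,1,0,2,0,2,0],
[],
[2,0,1,0,1,0,2,0,1,0,1],
[1,0,1,2,0,1,0,1,0,2,0],
[1,0,1,0,1,2,0,1,0,1,0,2,1],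
[2,0,1,0,1,2,0,1,0,1],
[0,2,1,2,0,2,0,1,0,2,0,2,1,2],
[],
[1,0,2,1,0,1,0,2,0,1],
[1,0,1,0,2,0,1,0,1,0,2],
[],
[0,1,0,1],
[0,1,2,0,1,0,1,0,2,0,1],
[2,0,1,0,1,2],
[2,1,0,2,0,1,0,1,0,2,1,0,2],
[],
[1,0,1,2,0,1,0,1,2,0],
[0,2,0,1,0,1,0,2,1,0,1],
[1,0,1,0],
[],
[],
[1,0,2,0,2,0,2,1,0,1,2,0,2,0,2,1],
[0,2,1,0,1,2,0,2,1,0,1,2,0,1,2],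
[0,1,2,0,2,0,1,0,2,1,0,1,0,2,0],
[],
[0,1,2,0,1,2,1,0,1,0,2,0,1,2,0],
[1,0,2,0,2,1,0,1,0,2,0,2,0,1],
[0,1,2,0,2,1,0,1,0,2,0,2,1,0],
[1,2,0,2,0,2,1,0,1,0,2,0,2,0,2,1],
[],
[0,1,0,2,1,2,0,1],
[0,1,0,1,0,2,1,0,1,0,2],
[],
[2,0,2,0,2,1,0,1,0,2,0,2,0,2],
[0,2,0,1,0,1,2,0,1,0,1],
[0,1,0,1,0,2,0,1,0,1,2],
[2,0,1,2,0,2,1,0,1,2,0,2,1,0,1],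
[0,1,0,1,0,2,1,2],
[],
[1,0,1,2,0,1,0,1,2,0,2,1,2],
[],
[1,2,0,1,2,0,2,1,0,1,2,0,2,1,0],
[0,1,2,1,0,1,0,2,0,1,2,1,2],
[2,0,2,0,1,0,1,0,2,1,0,2],
[0,2,0,1,0,1,2,0,1,0,2,0,2,1,0],
[0,1,0,2,0,1,0,1,2,0,1],
[0,2,1,2,0,2,0,1,0,2,1,0,1],
[],
[],
[0,1,2,0,1,0,1,2,0,1,0,2,0,2,0],
[1,0,2,1,0,1,0,2,0,1],
[1,0,1,2,0,1,0,1,2,0],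
[],
[],
[],
[],
[],
[],
[],
[],
[0,2,0,1,2,1,0,1,0,2,0,1,2,1,0],
[0,2,0,2,0,2,1,0,1,2,0,2,0,2],
[0,1,2,0,2,1,0,1,2,0,2,1,0,2,1],
[0,2,0,2,0,1,0,1,2,0,1,0,1,2,0],
[],
[],
[0,2,0,2,1,0,1,0,2,0,2,0],
[0,2,1,0,2,1,0,1,0,2,0,1,2,0],
[1,0,2,0,2,0,1,0,1,2,0,2,0,1],
[0,1,0,2,1,0,1,0,2,0,1],
[0,2,1,2,0,1,2,0,1,0,2,0,1],
[1,0,2,0,1,0,1,2,0,1],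
[],
[0,2,0,2,0,1,0,1,2,0,2,0],
[],
[0,2,0,1,0,1,2,0],
[0,1,2,0,2,0,1,0,1,2,0,2,1,0],
[1,0,1,0,2,0,1,0,1,2,0],
[2,0,1,2,0,1,0,1,0,2,0,2],
[0,1,2,0,1,0,1,2,0,1],
[],
[0,2,1,0,2,0,1,0,1,2,0,1,2,0],
[0,2,1,0,1,0,2,0],
[],
[],
[2,0,1,2,1,0,1,0,2,0,1,2,1],
[0,1,2,0,2,1,0,1,2,0,2,1,0,1,2],
[0,2,0,1,0,1,0,2,1,0],
[0,2,0,1,2,1,0,1,0,2,0,1,2,1,0],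
[],
[2,0,1,0,1,0,2,1],
[1,0,1,2,0,1,0,1,0,2,0,1],
[1,2,0,1,2,1,0,1,0,2,0,1,2],
[],
[0,1,2,0,1,2,0,2,1,0,1,2,0,2,1],
[2,0,2,0,1,0,1,2,0,2],
[0,2,0,2,0,2,1,0,1,2,0,2,0,2],
[],
[1,2,0,1,0,1,2,0,1,0,2,0,2],
[2,1,0,2,0,1,0,1,2,0,1,2],
[0,2,1,0,1,2,0,2,1,0,1,2,0,2,1],
[1,2,0,2,1,0,1,2,0,2,1,0,2,1,0],
[],
[0,1,2,0,2,1,0,2,1,0,1,2,0,2,1],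
[0,1,2,0,2,1,0,1,2,0,2,1,0,2,1],
[],
[1,2,0,2,1,0,2,1,0,1,2,0,2,1,0],
[1,0,2,1,0,1,2,0,1,2,0,2,1,0,1,2,1],
[0,1,2,0,1,0,1,0,2,0],
[2,0,2,1,0,1,0,2,0,2],
[1,2,0,2,1,0,1,2,0,1,2,0,2,1,0],
[],
[0,2,0,2,0,1,0,1,2,0,1,0,1,2,0],
[],
[1,0,1,0,2,0,1,0,1,0,2],
[0,2,0,1,0,1,0,2,1,0,1],
[0,1,2,0,1,2,1,0,1,0,2,0,1,2,0],
[2,0,2,0,2,1,0,1,0,2,0,2,0,2],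
[1,2,0,1,2,0,2,1,0,1,2,0,2,1,0],
[0,1,2,0,1,0,1,2,0,1,0,2,0,2,0],
[],
[],
[0,2,0,2,0,1,0,1,2,0,2,0],
[0,2,1,0,2,0,1,0,1,2,0,1,2,0],
[],
[],
[],
[],
[],
[],
[],
[],
[1,2,0,1,0,1,0,2],
[2,0,2,0,1,0,1,2,0,1,0,1,2],
[0,1,2,0,2,1,0,1,2,0,1,2,0,2,1],
[2,0,1,0,1,0,2,0,1,0,1],
[0,2,0,2,1,0,1,0,2,0,2,0],
[],
[],
[2,0,1,0,1,0,2,1,0,1,0],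
[1,0,2,0,1,0,1,0,2,1,0,1],
[2,1,0,2,1,0,1,0,2,0,1,2],
[1,2,1,0,1,2,0,2,1,0,2,1,0,1,2,0,1],
[1,0,1,2,0,1,0,1,0,2,0],
[0,2,1,0,2,1,0,1,0,2,0,1,2,0],
[],
[0,1,0,1,2,0,1,0,1,0,2],
[],
[],
[2,0,1,0,1,2,0,1,0,2,0,2,1],
[2,0,2,1,0,2,1,0,1,2,0,2,1,0,1],
[1,0,1,0,1,2,0,1,0,1,0,2,1],
[1,0,2,0,2,0,1,0,1,2,0,2,0,1],
[1,2,0,1,0,1,0,2],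
[],
[0,1,0,2,0,1,0,1,0,2,1],
[1,2,0,2,0,1,0,2,1,0,1,0,2],
[],
[0,1,0,1,2,0,1,0,2,0,2,1,2],
[2,0,1,0,1,2,0,1,0,1],
[0,1,0,2,1,0,1,0,2,0,1],
[2,0,2,0,1,0,1,2,0,1,0,1,2],
[],
[1,2,0,1,0,1,2,0,1,0],
[0,2,1,0,1,2,0,2,1,0,2,1,0,1,2],
[2,1,2,0,2,0,1,0,2,1,0,1,0],
[],
[0,2,1,2,0,2,0,1,0,2,0,2,1,2],
[0,2,1,2,0,1,2,0,1,0,2,0,1],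
[0,1,2,0,2,1,0,1,2,0,1,2,0,2,1],
[],
[0,2,0,1,2,0,1,0,1,0,2,0,1,2,0],
[1,2,0,1,0,1,0,2,1,0,1,0,1],
[1,0,1,0,2,1,0,1,0,2],
[2,1,2,0,2,0,1,0,1,2,0,2,1,2],
[],
[1,0,2,0,1,0,1,2,0,1],
[2,0,1,0,1,0,2,0,1,0,1],
[],
[1,0,1,0],
[1,0,2,0,2,1,0,1,0,2,0,2,0,1],
[0,2,0,1,0,1,2,0,1,0,1],
[0,1,2,1,0,1,0,2,0,1,2,1,2],
[1,0,2,1,0,1,0,2,0,1],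
[],
[0,2,0,2,1,0,1,0,2,0,2,0],
[],
[0,2,1,0,1,0,2,0],
[2,0,1,0,1,0,2,1],
[1,2,0,1,0,1,2,0,1,0,2,0,2],
[1,2,0,2,1,0,2,1,0,1,2,0,2,1,0],
[1,0,1,0,2,0,1,0,1,0,2],
[0,2,0,2,0,1,0,1,2,0,2,0],
[],
[],
[0,1,0,1,2,0,1,0,1,0,2],
[],
[],
[],
[],
[],
[],
[],
[],
[1,2,0,1,0,1,0,2,0,1,0],
[0,1,0,1,2,0,1,0,1,2],
[0,2,1,0,2,0,1,0,1,0,2,1,0,2,0],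
[0,1,0,1],
[0,2,0,1,0,1,2,0],
[2,0,1,0,1,0,2,1,0,1,0],
[],
[],
[],
[1,2,0,2,0,1,0,1,2,0,2,1],
[1,0,1,2,0,2,1,0,2,1,0,1,2,0,2],
[0,1,2,0,1,0,1,0,2,0,1],
[0,1,2,0,2,0,1,0,1,2,0,2,1,0],
[1,0,2,0,1,0,1,0,2,1,0,1],
[1,2,0,1,0,1,0,2,0,1,0],
[],
[1,2,0,2,1,0,1,0,2,0,2,1],
[],
[1,2,0,1,0,1,2,0,1,2,1,2,0],
[2,0,1,0,1,2],
[1,0,1,0,2,0,1,0,1,2,0],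
[2,1,0,2,1,0,1,0,2,0,1,2],
[0,1,0,1,2,0,1,0,1,2],
[],
[2,0,2,1,0,1,2,0,1,2,0,2,1,0,1],
[0,1,0,2,1,2,0,2,0,1,0,2,1],
[],
[2,1,0,2,0,1,0,1,0,2,1,0,2],
[2,0,1,2,0,1,0,1,0,2,0,2],
[1,2,1,0,1,2,0,2,1,0,2,1,0,1,2,0,1],
[0,2,1,0,2,0,1,0,1,0,2,1,0,2,0],
[],
[1,0,2,0,1,0,1,0,2,1,0],
[2,1,0,1,0,2],
[2,0,1,2,0,1,0,1,0,2,0,1,2],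
[],
[0,1,2,0,1,0,1,2,0,1],
[1,0,1,2,0,1,0,1,0,2,0],
[0,1,0,1],
[],
[0,1,2,0,2,1,0,1,0,2,0,2,1,0],
[0,1,0,1,0,2,0,1,0,1,2],
[2,0,2,0,1,0,1,0,2,1,0,2],
[1,0,1,2,0,1,0,1,2,0],
[],
[0,2,1,0,2,1,0,1,0,2,0,1,2,0],
[0,2,0,1,0,1,2,0],
[],
[1,0,1,2,0,1,0,1,0,2,0,1],
[2,1,0,2,0,1,0,1,2,0,1,2],
[1,0,2,1,0,1,2,0,1,2,0,2,1,0,1,2,1],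
[0,2,0,1,0,1,0,2,1,0,1],
[0,2,1,0,2,0,1,0,1,2,0,1,2,0],
[],
[2,0,1,0,1,0,2,1,0,1,0],
[],
[0,1,0,2,0,1,0,1,0,2,1],
[1,2,0,1,0,1,2,0,1,0],
[0,2,0,1,2,0,1,0,1,0,2,0,1,2,0],
[1,0,1,0],
[0,2,1,0,1,0,2,0],
[0,1,0,1,2,0,1,0,1,0,2],
[],
[],
[],
[],
[],
[],
[],
[],
[],
[]]

def idx (a : Dt) : ℕ := ([1,2,3,4,5,6,8,9] : List (Fin 12)).idxOf a.val

def word (a b c : Dt) : List ℕ := tbl.getD (idx a * 64 + idx b * 8 + idx c) []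

set_option maxHeartbeats 4000000 in
set_option maxRecDepth 20000 in
lemma word_spec : ∀ a b c : Dt, a ≠ b → b ≠ c → a ≠ c →
    ((word a b c).map gen).prod = swap a b * swap b c := by decide

lemma gen_mem (i : ℕ) : gen i ∈ Subgroup.closure ({g1, g2, g3} : Set (Perm Dt)) := by
  match i with
  | 0 => exact Subgroup.subset_closure (by simp [gen])
  | 1 => exact Subgroup.subset_closure (by simp [gen])
  | 2 => exact Subgroup.subset_closure (by simp [gen])
  | (n+3) => exact (by simp [gen] : gen (n+3) = 1) ▸ one_mem _

lemma swap_swap_mem {a b c : Dt} (hab : a ≠ b) (hbc : b ≠ c) (hac : a ≠ c) :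
    swap a b * swap b c ∈ Subgroup.closure ({g1, g2, g3} : Set (Perm Dt)) := by
  rw [← word_spec a b c hab hbc hac]
  refine Subgroup.list_prod_mem _ ?_
  intro x hx
  obtain ⟨i, _, rfl⟩ := List.mem_map.1 hx
  exact gen_mem i

lemma threeCycle_decomp {β : Type*} [DecidableEq β] [Fintype β] {σ : Perm β}
    (h : σ.IsThreeCycle) :
    ∃ a b c : β, a ≠ b ∧ b ≠ c ∧ a ≠ c ∧ σ = swap a b * swap b c := by
  obtain ⟨a, ha, -⟩ := h.isCycle
  have h3 : σ ^ 3 = 1 := by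
    rw [← h.orderOf]; exact pow_orderOf_eq_one σ
  have hcc : σ (σ (σ a)) = a := by
    have : (σ ^ 3) a = a := by rw [h3]; rfl
    simpa [pow_succ, Equiv.Perm.mul_apply] using this
  have hac : a ≠ σ (σ a) := by
    intro hh
    apply ha
    conv_lhs => rw [hh]
    exact hcc
  have hbc : σ a ≠ σ (σ a) := fun hh => ha (σ.injective hh).symm
  refine ⟨a, σ a, σ (σ a), Ne.symm ha, hbc, hac, ?_⟩
  have hsupp : σ.support = {a, σ a, σ (σ a)} := by
    symm
    apply Finset.eq_of_subset_of_card_le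
    · intro x hx
      simp only [Finset.mem_insert, Finset.mem_singleton] at hx
      rcases hx with rfl | rfl | rfl
      · exact Equiv.Perm.mem_support.2 ha
      · exact Equiv.Perm.mem_support.2 (Ne.symm hbc)
      · exact Equiv.Perm.mem_support.2 (by rw [hcc]; exact hac)
    · have hcard : ({a, σ a, σ (σ a)} : Finset β).card = 3 :=
        Finset.card_eq_three.2 ⟨a, σ a, σ (σ a), Ne.symm ha, hac, hbc, rfl⟩
      rw [h.card_support, hcard]
  ext x
  rw [Equiv.Perm.mul_apply]
  by_cases hxa : x = a
  · subst hxa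
    rw [swap_apply_of_ne_of_ne (Ne.symm ha) hac, swap_apply_left]
  · by_cases hxb : x = σ a
    · subst hxb
      rw [swap_apply_left, swap_apply_of_ne_of_ne (Ne.symm hac) (Ne.symm hbc)]
    · by_cases hxc : x = σ (σ a)
      · subst hxc
        rw [swap_apply_right, swap_apply_right, hcc]
      · have hx : σ x = x := by
          by_contra hne
          have hmem : x ∈ σ.support := Equiv.Perm.mem_support.2 hne
          rw [hsupp] at hmem
          simp only [Finset.mem_insert, Finset.mem_singleton] at hmem
          tauto
        rw [swap_apply_of_ne_of_ne hxb hxc, swap_apply_of_ne_of_ne hxa hxb, hx]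

lemma sign_g1 : Equiv.Perm.sign g1 = 1 := by
  rw [g1, Equiv.Perm.sign_subtypePerm e1 h1 h1', e1, List.formPerm_pair, List.formPerm_pair,
    map_mul, Equiv.Perm.sign_swap (by decide), Equiv.Perm.sign_swap (by decide)]
  rfl

lemma sign_g2 : Equiv.Perm.sign g2 = 1 := by
  rw [g2, Equiv.Perm.sign_subtypePerm e2 h2 h2', e2, List.formPerm_pair, List.formPerm_pair,
    map_mul, Equiv.Perm.sign_swap (by decide), Equiv.Perm.sign_swap (by decide)]
  rfl

lemma sign_g3 : Equiv.Perm.sign g3 = 1 := by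
  rw [g3, Equiv.Perm.sign_subtypePerm e3 h3 h3', e3, List.formPerm_pair, List.formPerm_pair,
    List.formPerm_pair, List.formPerm_pair, map_mul, map_mul, map_mul,
    Equiv.Perm.sign_swap (by decide), Equiv.Perm.sign_swap (by decide),
    Equiv.Perm.sign_swap (by decide), Equiv.Perm.sign_swap (by decide)]
  rfl

lemma closure_eq_alt :
    Subgroup.closure ({g1, g2, g3} : Set (Perm Dt)) = alternatingGroup Dt := by
  apply _root_.le_antisymm
  · rw [Subgroup.closure_le]
    intro x hx
    rcases hx with rfl | rfl | rfl
    · exact Equiv.Perm.mem_alternatingGroup.2 sign_g1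
    · exact Equiv.Perm.mem_alternatingGroup.2 sign_g2
    · exact Equiv.Perm.mem_alternatingGroup.2 sign_g3
  · rw [← Equiv.Perm.closure_three_cycles_eq_alternating, Subgroup.closure_le]
    intro σ hσ
    obtain ⟨a, b, c, hab, hbc, hac, rfl⟩ := threeCycle_decomp hσ
    exact swap_swap_mem hab hbc hac

lemma not_pd_iff : ∀ i : Fin 12, ¬ pd i ↔ (i = 7 ∨ i = 10 ∨ i = 11 ∨ i = 0) := by decide

lemma hmap : Subgroup.map (Equiv.Perm.ofSubtype) (alternatingGroup Dt) =
    alternatingGroup (Fin 12) ⊓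
      ⨅ i ∈ ({7, 10, 11, 12} : Set (Fin 12)),
        MulAction.stabilizer (Equiv.Perm (Fin 12)) i := by
  have h12 : (12 : Fin 12) = 0 := rfl
  ext g
  simp only [Subgroup.mem_map, Subgroup.mem_inf, Subgroup.mem_iInf,
    MulAction.mem_stabilizer_iff, Equiv.Perm.smul_def]
  constructor
  · rintro ⟨g', hg', rfl⟩
    constructor
    · rw [Equiv.Perm.mem_alternatingGroup, Equiv.Perm.sign_ofSubtype]
      exact Equiv.Perm.mem_alternatingGroup.1 hg'
    · intro i hi
      have hnp : ¬ pd i := by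
        rw [not_pd_iff]
        simp only [Set.mem_insert_iff, Set.mem_singleton_iff, h12] at hi
        tauto
      exact Equiv.Perm.ofSubtype_apply_of_not_mem g' hnp
  · rintro ⟨hsign, hfix⟩
    have hfix4 : ∀ i : Fin 12, ¬ pd i → g i = i := by
      intro i hi
      rw [not_pd_iff] at hi
      rcases hi with rfl | rfl | rfl | rfl
      · exact hfix 7 (by simp)
      · exact hfix 10 (by simp)
      · exact hfix 11 (by simp)
      · rw [← h12]; exact hfix 12 (by simp)
    have hiff : ∀ x, pd x ↔ pd (g x) := by
      intro x
      constructor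
      · intro hx
        by_contra hgx
        have h1 := hfix4 _ hgx
        have h2 : g x = x := g.injective h1
        rw [h2] at hgx
        exact hgx hx
      · intro hgx
        by_contra hx
        rw [hfix4 x hx] at hgx
        exact hx hgx
    have hne : ∀ x, g x ≠ x → pd x := by
      intro x hx
      by_contra hnx
      exact hx (hfix4 x hnx)
    refine ⟨g.subtypePerm (fun x => (hiff x).symm), ?_, ?_⟩
    · rw [Equiv.Perm.mem_alternatingGroup, Equiv.Perm.sign_subtypePerm g (fun x => (hiff x).symm) hne]
      exact Equiv.Perm.mem_alternatingGroup.1 hsign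
    · exact Equiv.Perm.ofSubtype_subtypePerm (fun x => (hiff x).symm) hne

lemma image_eq :
    Equiv.Perm.ofSubtype '' ({g1, g2, g3} : Set (Perm Dt)) = {e1, e2, e3} := by
  rw [Set.image_insert_eq, Set.image_insert_eq, Set.image_singleton,
    g1, g2, g3, Equiv.Perm.ofSubtype_subtypePerm h1 h1',
    Equiv.Perm.ofSubtype_subtypePerm h2 h2', Equiv.Perm.ofSubtype_subtypePerm h3 h3']

end EtaGenAux

open EtaGenAux in
/-- The permutations η₁ = (2,5)(4,8), η₂ = (1,6)(4,9), η₃ = (1,3)(2,8)(4,9)(5,6)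
generate the full alternating group on Δ = {1,2,3,4,5,6,8,9}, viewed inside the
permutations of {1,…,12} (here modelled by `Fin 12`, with `12 = 0`). -/
theorem eta_generate_alternating_on_Delta :
    Subgroup.closure
        ({[(2 : Fin 12), 5].formPerm * [(4 : Fin 12), 8].formPerm,
          [(1 : Fin 12), 6].formPerm * [(4 : Fin 12), 9].formPerm,
          [(1 : Fin 12), 3].formPerm * [(2 : Fin 12), 8].formPerm *
            [(4 : Fin 12), 9].formPerm * [(5 : Fin 12), 6].formPerm} :
          Set (Equiv.Perm (Fin 12)))
      = alternatingGroup (Fin 12) ⊓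
          ⨅ i ∈ ({7, 10, 11, 12} : Set (Fin 12)),
            MulAction.stabilizer (Equiv.Perm (Fin 12)) i := by
  show Subgroup.closure ({e1, e2, e3} : Set (Equiv.Perm (Fin 12))) = _
  rw [← image_eq, ← MonoidHom.map_closure, closure_eq_alt, hmap]
end

section
/- The permutations g = (3,10,8), y = (1,2,3)(4,5,6)(7,8,9)(10,11,12) of {1,...,12}, together with the full alternating group on the subset {1,2,3,4,5,6,8,9} (embedded as permutations of {1,...,12} fixing the other points), generate the alternating group A_12 on {1,...,12}. -/
open Equiv List

def pg : Perm (Fin 12) := [(3 : Fin 12), 10, 8].formPerm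
def py : Perm (Fin 12) :=
  [(1 : Fin 12), 2, 3].formPerm * [(4 : Fin 12), 5, 6].formPerm *
    [(7 : Fin 12), 8, 9].formPerm * [(10 : Fin 12), 11, 12].formPerm
def pa : Perm (Fin 12) := [(2 : Fin 12), 4, 5].formPerm
def pb : Perm (Fin 12) := [(3 : Fin 12), 4, 5].formPerm
def pc : Perm (Fin 12) := [(1 : Fin 12), 4, 5].formPerm

def us : List (Perm (Fin 12)) :=
  [1, pg*py*pg*py*pg*pg, pg*py*pg*pb*pa, py⁻¹*pg*pg*pb*py⁻¹*pg,
   pg*py*pg*pb*pa*py, pg*pb*py*pg*py⁻¹, pg*py⁻¹*pc*pg*py⁻¹,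
   py⁻¹*pg*pg*py*pg*pg, pg*pg*py*pg*py*pg]

def dl : List (Fin 12) := [1,2,3,4,5,6,8,9]

set_option maxRecDepth 10000 in
theorem cover : ∀ a b c : Fin 12, a ≠ b → b ≠ c → a ≠ c →
    ∃ u ∈ us, u a ∈ dl ∧ u b ∈ dl ∧ u c ∈ dl := by decide

abbrev genSet : Set (Perm (Fin 12)) :=
  ({[(3 : Fin 12), 10, 8].formPerm,
    [(1 : Fin 12), 2, 3].formPerm * [(4 : Fin 12), 5, 6].formPerm *
      [(7 : Fin 12), 8, 9].formPerm * [(10 : Fin 12), 11, 12].formPerm} :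
    Set (Perm (Fin 12)))
    ∪ {σ : Perm (Fin 12) | σ ∈ alternatingGroup (Fin 12) ∧
        ∀ i ∈ ({7, 10, 11, 12} : Set (Fin 12)), σ i = i}

theorem formPerm3 (a b c : Fin 12) :
    [a, b, c].formPerm = Equiv.swap a b * Equiv.swap b c := by
  simp [List.formPerm_cons_cons, List.formPerm_singleton]

theorem sign_formPerm3 {a b c : Fin 12} (h1 : a ≠ b) (h2 : b ≠ c) :
    Perm.sign ([a, b, c].formPerm) = 1 := by
  rw [formPerm3]; simp [Perm.sign_swap, h1, h2]

theorem pg_mem : pg ∈ Subgroup.closure genSet :=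
  Subgroup.subset_closure (Or.inl (Or.inl rfl))

theorem py_mem : py ∈ Subgroup.closure genSet :=
  Subgroup.subset_closure (Or.inl (Or.inr rfl))

theorem alt_mem (σ : Perm (Fin 12)) (h1 : σ ∈ alternatingGroup (Fin 12))
    (h2 : ∀ i ∈ ({7, 10, 11, 12} : Set (Fin 12)), σ i = i) :
    σ ∈ Subgroup.closure genSet :=
  Subgroup.subset_closure (Or.inr ⟨h1, h2⟩)

theorem abc_mem : ∀ x ∈ [pa, pb, pc], x ∈ Subgroup.closure genSet := by
  intro x hx
  have hfix : ∀ x ∈ [pa, pb, pc], ∀ i ∈ ({7, 10, 11, 12} : Set (Fin 12)), x i = i := by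
    intro x hx i hi
    simp only [List.mem_cons, List.not_mem_nil, or_false] at hx
    simp only [Set.mem_insert_iff, Set.mem_singleton_iff] at hi
    rcases hi with rfl | rfl | rfl | rfl <;> rcases hx with rfl | rfl | rfl <;> decide
  refine alt_mem _ ?_ (hfix x hx)
  simp only [List.mem_cons, List.not_mem_nil, or_false] at hx
  rcases hx with rfl | rfl | rfl <;>
    exact Perm.mem_alternatingGroup.2 (sign_formPerm3 (by decide) (by decide))

theorem us_mem : ∀ u ∈ us, u ∈ Subgroup.closure genSet := by
  have hg := pg_mem; have hy := py_mem
  have ha : pa ∈ Subgroup.closure genSet := abc_mem pa (by simp)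
  have hb : pb ∈ Subgroup.closure genSet := abc_mem pb (by simp)
  have hc : pc ∈ Subgroup.closure genSet := abc_mem pc (by simp)
  intro u hu
  simp only [us, List.mem_cons, List.not_mem_nil, or_false] at hu
  rcases hu with rfl|rfl|rfl|rfl|rfl|rfl|rfl|rfl|rfl
  · exact one_mem _
  · exact mul_mem (mul_mem (mul_mem (mul_mem (mul_mem hg hy) hg) hy) hg) hg
  · exact mul_mem (mul_mem (mul_mem (mul_mem hg hy) hg) hb) ha
  · exact mul_mem (mul_mem (mul_mem (mul_mem (mul_mem (inv_mem hy) hg) hg) hb) (inv_mem hy)) hg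
  · exact mul_mem (mul_mem (mul_mem (mul_mem (mul_mem hg hy) hg) hb) ha) hy
  · exact mul_mem (mul_mem (mul_mem (mul_mem hg hb) hy) hg) (inv_mem hy)
  · exact mul_mem (mul_mem (mul_mem (mul_mem hg (inv_mem hy)) hc) hg) (inv_mem hy)
  · exact mul_mem (mul_mem (mul_mem (mul_mem (mul_mem (inv_mem hy) hg) hg) hy) hg) hg
  · exact mul_mem (mul_mem (mul_mem (mul_mem (mul_mem hg hg) hy) hg) hy) hg

theorem Equiv.Perm.apply_inv_self {α : Type*} (f : Perm α) (x : α) : f (f⁻¹ x) = x :=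
  f.apply_symm_apply x

theorem threeCycle_mem {σ : Perm (Fin 12)} (hσ : σ.IsThreeCycle) :
    σ ∈ Subgroup.closure genSet := by
  have hcard : σ.support.card = 3 := hσ.card_support
  obtain ⟨a, ha⟩ : σ.support.Nonempty := Finset.card_pos.1 (by omega)
  set b := σ a with hb
  set c := σ b with hc
  have hb_mem : b ∈ σ.support := Perm.apply_mem_support.2 ha
  have hab : a ≠ b := Ne.symm (Perm.mem_support.1 ha)
  have hbc : b ≠ c := Ne.symm (Perm.mem_support.1 hb_mem)
  have hord : σ ^ 3 = 1 := by
    rw [← hσ.orderOf]; exact pow_orderOf_eq_one σ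
  have h3a : σ c = a := by
    have := congrArg (fun p : Perm (Fin 12) => p a) hord
    simpa [pow_succ, Perm.mul_apply, ← hb, ← hc] using this
  have hac : a ≠ c := by
    intro h
    apply Perm.mem_support.1 ha
    rw [← hb, ← h3a, ← h]
  have hsupp : σ.support = {a, b, c} := by
    refine (Finset.eq_of_subset_of_card_le ?_ ?_).symm
    · intro x hx
      simp only [Finset.mem_insert, Finset.mem_singleton] at hx
      rcases hx with rfl | rfl | rfl
      · exact ha
      · exact hb_mem
      · exact Perm.apply_mem_support.2 hb_mem
    · rw [hcard]
      rw [Finset.card_insert_of_notMem (by simp [hab, hac]),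
        Finset.card_insert_of_notMem (by simp [hbc]), Finset.card_singleton]
  obtain ⟨u, hu, hua, hub, huc⟩ := cover a b c hab hbc hac
  have huH : u ∈ Subgroup.closure genSet := us_mem u hu
  set t : Perm (Fin 12) := u * σ * u⁻¹ with ht
  have htfix : ∀ i ∈ ({7, 10, 11, 12} : Set (Fin 12)), t i = i := by
    intro i hi
    have hidl : i ∉ dl := by
      simp only [Set.mem_insert_iff, Set.mem_singleton_iff] at hi
      rcases hi with rfl | rfl | rfl | rfl <;> decide
    have hkey : σ (u⁻¹ i) = u⁻¹ i := by
      rw [← Perm.notMem_support, hsupp]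
      simp only [Finset.mem_insert, Finset.mem_singleton]
      push_neg
      refine ⟨?_, ?_, ?_⟩ <;> intro h <;> apply hidl
      · rw [show i = u a from by rw [← h, Perm.apply_inv_self]]; exact hua
      · rw [show i = u b from by rw [← h, Perm.apply_inv_self]]; exact hub
      · rw [show i = u c from by rw [← h, Perm.apply_inv_self]]; exact huc
    rw [ht, Perm.mul_apply, Perm.mul_apply, hkey, Perm.apply_inv_self]
  have htalt : t ∈ alternatingGroup (Fin 12) := by
    have hsσ : Perm.sign σ = 1 := by
      have : σ = Equiv.swap a b * Equiv.swap b c := by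
        ext x
        rcases eq_or_ne x a with rfl | hxa
        · simp [Perm.mul_apply, swap_apply_of_ne_of_ne hab hac, swap_apply_left, ← hb]
        rcases eq_or_ne x b with rfl | hxb
        · simp [Perm.mul_apply, swap_apply_left,
            swap_apply_of_ne_of_ne (Ne.symm hac) (Ne.symm hbc), ← hc]
        rcases eq_or_ne x c with rfl | hxc
        · simp [Perm.mul_apply, swap_apply_right, swap_apply_right, h3a]
        · have hx : x ∉ σ.support := by
            rw [hsupp]; simp [hxa, hxb, hxc]
          rw [Perm.notMem_support.1 hx, Perm.mul_apply,
            swap_apply_of_ne_of_ne hxb hxc, swap_apply_of_ne_of_ne hxa hxb]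
      rw [this]; simp [Perm.sign_swap, hab, hbc]
    rw [Perm.mem_alternatingGroup, ht]
    simp [Perm.sign_mul, hsσ]
  have htH : t ∈ Subgroup.closure genSet := alt_mem t htalt htfix
  have : σ = u⁻¹ * t * u := by rw [ht]; group
  rw [this]
  exact mul_mem (mul_mem (inv_mem huH) htH) huH

/-- The permutations g = (3,10,8) and y = (1,2,3)(4,5,6)(7,8,9)(10,11,12),
together with the alternating group on Δ = {1,2,3,4,5,6,8,9} (even permutations
fixing {7,10,11,12} pointwise), generate A₁₂.  Here {1,…,12} is modelled by
`Fin 12`, with `12 = 0`. -/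
theorem g_y_and_altDelta_generate_A12 :
    Subgroup.closure
        (({[(3 : Fin 12), 10, 8].formPerm,
           [(1 : Fin 12), 2, 3].formPerm * [(4 : Fin 12), 5, 6].formPerm *
             [(7 : Fin 12), 8, 9].formPerm * [(10 : Fin 12), 11, 12].formPerm} :
            Set (Equiv.Perm (Fin 12)))
          ∪ {σ : Equiv.Perm (Fin 12) | σ ∈ alternatingGroup (Fin 12) ∧
              ∀ i ∈ ({7, 10, 11, 12} : Set (Fin 12)), σ i = i})
      = alternatingGroup (Fin 12) := by
  apply _root_.le_antisymm
  · rw [Subgroup.closure_le]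
    rintro x (hx | hx)
    · rcases hx with rfl | rfl
      · exact Perm.mem_alternatingGroup.2 (sign_formPerm3 (by decide) (by decide))
      · refine Perm.mem_alternatingGroup.2 ?_
        rw [map_mul, map_mul, map_mul,
          sign_formPerm3 (show (1 : Fin 12) ≠ 2 by decide) (by decide),
          sign_formPerm3 (show (4 : Fin 12) ≠ 5 by decide) (by decide),
          sign_formPerm3 (show (7 : Fin 12) ≠ 8 by decide) (by decide),
          sign_formPerm3 (show (10 : Fin 12) ≠ 11 by decide) (by decide)]
        norm_num
    · exact hx.1
  · have h := (Subgroup.closure_le (K := Subgroup.closure genSet)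
      (k := {σ : Perm (Fin 12) | σ.IsThreeCycle})).2
      (fun σ hσ => threeCycle_mem hσ)
    rwa [Equiv.Perm.closure_three_cycles_eq_alternating] at h
end
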